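/- Every ternary self-dual code C of length n arises from a 3-frame of a unimodular lattice: the set F = {√3·e₁, …, √3·eₙ} of scaled standard basis vectors is a 3-frame of the Construction A lattice A₃(C), and π_F(A₃(C)) = C. -/

import Mathlib

open scoped BigOperators

namespace Ternary

/-- Hamming weight of a ternary vector. -/
def wt {n : ℕ} (x : Fin n → ZMod 3) : ℕ :=
  (Finset.filter (fun i => x i ≠ 0) Finset.univ).card

/-- Dual of a set of ternary vectors under the standard inner product. -/
def dualCode {n : ℕ} (C : Set (Fin n → ZMod 3)) : Set (Fin n → ZMod 3) :=
  {x | ∀ y ∈ C, ∑ i, x i * y i = 0}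

/-- A ternary self-dual code (self-duality forces linearity). -/
def IsSelfDual {n : ℕ} (C : Set (Fin n → ZMod 3)) : Prop :=
  dualCode C = C

/-- `C` has minimum weight `d`. -/
def HasMinWeight {n : ℕ} (C : Set (Fin n → ZMod 3)) (d : ℕ) : Prop :=
  (∃ x ∈ C, x ≠ 0 ∧ wt x = d) ∧ ∀ x ∈ C, x ≠ 0 → d ≤ wt x

/-- A monomial matrix: exactly one nonzero entry in each row and each column. -/
def IsMonomial {n : ℕ} (P : Matrix (Fin n) (Fin n) (ZMod 3)) : Prop :=
  (∀ i, ∃! j, P i j ≠ 0) ∧ (∀ j, ∃! i, P i j ≠ 0)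

/-- The code `C · P = {xP : x ∈ C}`. -/
def codeMul {n : ℕ} (C : Set (Fin n → ZMod 3)) (P : Matrix (Fin n) (Fin n) (ZMod 3)) :
    Set (Fin n → ZMod 3) :=
  (fun x => Matrix.vecMul x P) '' C

/-- Equivalence of ternary codes via monomial matrices. -/
def CodeEquiv {n : ℕ} (C C' : Set (Fin n → ZMod 3)) : Prop :=
  ∃ P, IsMonomial P ∧ C' = codeMul C P

/-- Standard inner product on `ℝⁿ`. -/
noncomputable def ip {n : ℕ} (x y : Fin n → ℝ) : ℝ := ∑ i, x i * y i

/-- Construction A lattice `A₃(C) = (1/√3){x ∈ ℤⁿ : x mod 3 ∈ C}`. -/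
def A3 {n : ℕ} (C : Set (Fin n → ZMod 3)) : Set (Fin n → ℝ) :=
  {v | ∃ y : Fin n → ℤ, (fun i => ((y i : ZMod 3))) ∈ C ∧
        v = fun i => (y i : ℝ) / Real.sqrt 3}

/-- The dual lattice (as a set): vectors with integral inner product with all of `L`. -/
def dualLattice {n : ℕ} (L : Set (Fin n → ℝ)) : Set (Fin n → ℝ) :=
  {x | ∀ y ∈ L, ∃ m : ℤ, ip x y = (m : ℝ)}

/-- A 3-frame of `L`: vectors `f₁, …, fₙ ∈ L` with `(fᵢ, fⱼ) = 3δᵢⱼ`. -/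
def IsFrame {n : ℕ} (L : Set (Fin n → ℝ)) (f : Fin n → Fin n → ℝ) : Prop :=
  (∀ i, f i ∈ L) ∧ ∀ i j, ip (f i) (f j) = if i = j then 3 else 0

/-- The map `π_F(x) = ((x,f₁) mod 3, …, (x,fₙ) mod 3)`, realized via `Int.floor`
(which agrees with `(x, fᵢ)` whenever that inner product is an integer). -/
noncomputable def piF {n : ℕ} (f : Fin n → Fin n → ℝ) (x : Fin n → ℝ) :
    Fin n → ZMod 3 :=
  fun i => ((⌊ip x (f i)⌋ : ℤ) : ZMod 3)

/-- The even sublattice `B₃(C)` of `A₃(C)`. -/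
def B3 {n : ℕ} (C : Set (Fin n → ZMod 3)) : Set (Fin n → ℝ) :=
  {v ∈ A3 C | ∃ m : ℤ, ip v v = 2 * (m : ℝ)}

/-- A decomposable code: a direct sum of two nonzero codes supported on
complementary sets of coordinates. -/
def IsDecomposableCode {n : ℕ} (C : Set (Fin n → ZMod 3)) : Prop :=
  ∃ S : Set (Fin n),
    (∃ x ∈ C, x ≠ 0 ∧ ∀ i ∉ S, x i = 0) ∧
    (∃ x ∈ C, x ≠ 0 ∧ ∀ i ∈ S, x i = 0) ∧
    (∀ x ∈ C, S.indicator x ∈ C)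

/-- A decomposable lattice: an orthogonal direct sum of two nonzero sublattices. -/
def IsDecomposableLattice {n : ℕ} (L : Set (Fin n → ℝ)) : Prop :=
  ∃ L₁ L₂ : Submodule ℤ (Fin n → ℝ),
    (L₁ : Set (Fin n → ℝ)) ⊆ L ∧ (L₂ : Set (Fin n → ℝ)) ⊆ L ∧
    (∃ x ∈ L₁, x ≠ (0 : Fin n → ℝ)) ∧ (∃ x ∈ L₂, x ≠ (0 : Fin n → ℝ)) ∧
    (∀ a ∈ L₁, ∀ b ∈ L₂, ip a b = 0) ∧
    L = {x | ∃ a ∈ L₁, ∃ b ∈ L₂, x = a + b}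

/-- The real all-ones vector. -/
def allOnesR (n : ℕ) : Fin n → ℝ := fun _ => 1

/-- The vector `e₁ = (√3, 0, …, 0)`. -/
noncomputable def e1 (n : ℕ) : Fin n → ℝ := fun i => if (i : ℕ) = 0 then Real.sqrt 3 else 0

/-- The straight construction `L_S(C) = ⟨(1/(2√3))𝟏, B₃(C)⟩`. -/
noncomputable def LS {n : ℕ} (C : Set (Fin n → ZMod 3)) : Set (Fin n → ℝ) :=
  {x | ∃ (m : ℤ) (b : Fin n → ℝ), b ∈ B3 C ∧
        x = (m : ℝ) • ((2 * Real.sqrt 3)⁻¹ • allOnesR n) + b}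

/-- The twisted construction `L_T(C) = ⟨(1/(2√3))𝟏 - e₁, B₃(C)⟩`. -/
noncomputable def LT {n : ℕ} (C : Set (Fin n → ZMod 3)) : Set (Fin n → ℝ) :=
  {x | ∃ (m : ℤ) (b : Fin n → ℝ), b ∈ B3 C ∧
        x = (m : ℝ) • ((2 * Real.sqrt 3)⁻¹ • allOnesR n - e1 n) + b}


/-- Every ternary self-dual code `C` of length `n` arises from a
3-frame: `F = {√3·e₁, …, √3·eₙ}` is a 3-frame of `A₃(C)` and
`π_F(A₃(C)) = C`. -/
theorem selfdual_from_standard_frame (n : ℕ) (C : Set (Fin n → ZMod 3))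
    (hC : IsSelfDual C) :
    IsFrame (A3 C) (fun i j => if j = i then Real.sqrt 3 else 0) ∧
    piF (fun i j => if j = i then Real.sqrt 3 else 0) '' A3 C = C := by
  have h3 : Real.sqrt 3 * Real.sqrt 3 = 3 := Real.mul_self_sqrt (by norm_num)
  have h3ne : Real.sqrt 3 ≠ 0 := by positivity
  have h0C : (0 : Fin n → ZMod 3) ∈ C := by
    rw [← hC]; intro y _; simp
  have key : ∀ (y : Fin n → ℤ) (i : Fin n),
      ip (fun k => (y k : ℝ) / Real.sqrt 3) (fun j => if j = i then Real.sqrt 3 else 0)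
        = (y i : ℝ) := by
    intro y i
    unfold ip
    rw [Finset.sum_eq_single i]
    · field_simp; simp
    · intro b _ hb; simp [hb]
    · simp
  constructor
  · constructor
    · intro i
      refine ⟨fun k => if k = i then 3 else 0, ?_, ?_⟩
      · convert h0C using 1
        funext k
        by_cases h : k = i <;> simp [h] <;> decide
      · funext j
        by_cases h : j = i
        · simp [h]
        · simp [h]
    · intro i j
      unfold ip
      rw [Finset.sum_eq_single i]
      · by_cases h : i = j <;> simp [h, h3]
      · intro b _ hb; simp [hb]
      · simp
  · ext c
    constructor
    · rintro ⟨x, ⟨y, hyC, rfl⟩, rfl⟩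
      convert hyC using 1
      funext i
      unfold piF
      rw [key y i, Int.floor_intCast]
    · intro hc
      refine ⟨fun k => ((c k).val : ℝ) / Real.sqrt 3,
        ⟨fun k => ((c k).val : ℤ), ?_, ?_⟩, ?_⟩
      · convert hc using 1
        funext k
        push_cast
        simp [ZMod.natCast_val, ZMod.cast_id]
      · funext k; push_cast; ring
      · funext i
        unfold piF
        have := key (fun k => ((c k).val : ℤ)) i
        rw [show (fun k => ((c k).val : ℝ) / Real.sqrt 3)
            = (fun k => (((fun k => ((c k).val : ℤ)) k : ℤ) : ℝ) / Real.sqrt 3) by push_cast; rfl,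
          this, Int.floor_intCast]
        push_cast
        simp [ZMod.natCast_val, ZMod.cast_id]


end Ternary
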